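/- arXiv:1304.6926 — 7 statements merged into one kernel-verified Lean document; each statement's English description precedes it below -/
import Mathlib

section
/- Let p ≥ 1, let ξ_0 < ⋯ < ξ_p be distinct real nodes with Lagrange basis polynomials l_0, …, l_p and edge functions e_i = −∑_{k=0}^{i−1} l_k′ (1 ≤ i ≤ p). Define the 0-form projection π⁰α = ∑_{i=0}^{p} α(ξ_i) l_i for α : ℝ → ℝ, and the 1-form projection π¹f = ∑_{i=1}^{p} (∫_{ξ_{i−1}}^{ξ_i} f(ξ) dξ) e_i for integrable f. If α : ℝ → ℝ is continuously differentiable, then the projection commutes with differentiation: (π⁰α)′(t) = (π¹(α′))(t) for all t ∈ ℝ. -/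
lemma abel_aux (A D : ℕ → ℝ) : ∀ p : ℕ,
    ∑ i ∈ Finset.Icc 1 p, (A i - A (i-1)) * (-(∑ k ∈ Finset.range i, D k)) =
      ∑ i ∈ Finset.range (p+1), A i * D i - A p * ∑ k ∈ Finset.range (p+1), D k := by
  intro p
  induction p with
  | zero => simp
  | succ n ih =>
    have h1 : (n+1) - 1 = n := by omega
    rw [Finset.sum_Icc_succ_top (by omega), ih, h1,
      Finset.sum_range_succ (fun i => A i * D i) (n+1),
      Finset.sum_range_succ D (n+1)]
    ring



/-- The commuting-diagram property `(π⁰ α)' = π¹ (α')` for the nodal (0-form)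
projection `π⁰α = ∑_i α(ξ_i) l_i` and the histopolant (1-form) projection
`π¹f = ∑_i (∫_{ξ_{i-1}}^{ξ_i} f) e_i`, for continuously differentiable `α`. -/
theorem projection_commutes_with_derivative
    (p : ℕ) (hp : 1 ≤ p) (ξ : ℕ → ℝ)
    (hξ : ∀ i j, i < j → j ≤ p → ξ i < ξ j)
    (l : ℕ → Polynomial ℝ)
    (hdeg : ∀ i, i ≤ p → (l i).natDegree ≤ p)
    (hl : ∀ i, i ≤ p → ∀ j, j ≤ p → (l i).eval (ξ j) = if i = j then 1 else 0)
    (e : ℕ → Polynomial ℝ)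
    (he : ∀ i, 1 ≤ i → i ≤ p →
      e i = -∑ k ∈ Finset.range i, Polynomial.derivative (l k))
    (α : ℝ → ℝ) (hα : ContDiff ℝ 1 α) :
    ∀ t : ℝ,
      deriv (fun s => ∑ i ∈ Finset.range (p + 1), α (ξ i) * (l i).eval s) t =
        ∑ i ∈ Finset.Icc 1 p, (∫ x in (ξ (i - 1))..(ξ i), deriv α x) * (e i).eval t := by
  intro t
  -- Step 1: LHS
  have hL : deriv (fun s => ∑ i ∈ Finset.range (p + 1), α (ξ i) * (l i).eval s) t =
      ∑ i ∈ Finset.range (p + 1), α (ξ i) * (Polynomial.derivative (l i)).eval t := by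
    rw [deriv_fun_sum (fun i _ => ((l i).differentiable.const_mul (α (ξ i))).differentiableAt)]
    refine Finset.sum_congr rfl fun i _ => ?_
    rw [deriv_const_mul _ (l i).differentiableAt, Polynomial.deriv]
  rw [hL]
  -- Step 2: FTC
  have hdiff : Differentiable ℝ α := hα.differentiable one_ne_zero
  have hcont : Continuous (deriv α) := hα.continuous_deriv le_rfl
  have hFTC : ∀ a b : ℝ, (∫ x in a..b, deriv α x) = α b - α a := fun a b =>
    intervalIntegral.integral_deriv_eq_sub (fun x _ => hdiff x)
      (hcont.intervalIntegrable a b)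
  -- Step 3: sum of l = 1
  have hsum : ∑ k ∈ Finset.range (p+1), l k = Polynomial.C 1 := by
    have hz : (∑ k ∈ Finset.range (p+1), l k) - Polynomial.C 1 = 0 := by
      apply Polynomial.eq_zero_of_natDegree_lt_card_of_eval_eq_zero _
        (f := fun i : Fin (p+1) => ξ i)
      · intro i j hij
        rcases lt_trichotomy (i:ℕ) (j:ℕ) with h|h|h
        · exact absurd hij (hξ i j h (by omega)).ne
        · exact Fin.ext h
        · exact absurd hij.symm (hξ j i h (by omega)).ne
      · intro j
        simp only [Polynomial.eval_sub, Polynomial.eval_finset_sum, Polynomial.eval_C]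
        rw [Finset.sum_congr rfl (fun k hk => hl k (by
          simp only [Finset.mem_range] at hk; omega) j (by omega))]
        simp [Finset.sum_ite_eq, (Finset.mem_range.2 j.isLt : (j:ℕ) ∈ Finset.range (p+1))]
      · refine lt_of_le_of_lt ?_ (by simp : p < Fintype.card (Fin (p+1)))
        refine le_trans (Polynomial.natDegree_sub_le _ _) ?_
        simp only [Polynomial.natDegree_C, max_le_iff]
        constructor
        · exact Polynomial.natDegree_sum_le_of_forall_le _ _ fun k hk =>
            hdeg k (by simp only [Finset.mem_range] at hk; omega)
        · omega
    have := sub_eq_zero.mp hz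
    exact this
  have hDsum : ∑ k ∈ Finset.range (p+1), (Polynomial.derivative (l k)).eval t = 0 := by
    have : Polynomial.derivative (∑ k ∈ Finset.range (p+1), l k) = 0 := by
      rw [hsum]; simp
    calc ∑ k ∈ Finset.range (p+1), (Polynomial.derivative (l k)).eval t
        = (Polynomial.derivative (∑ k ∈ Finset.range (p+1), l k)).eval t := by
          rw [map_sum, Polynomial.eval_finset_sum]
      _ = 0 := by rw [this]; simp
  -- Step 4: rewrite RHS and apply abel_aux
  have hR : ∑ i ∈ Finset.Icc 1 p, (∫ x in (ξ (i - 1))..(ξ i), deriv α x) * (e i).eval t =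
      ∑ i ∈ Finset.Icc 1 p, (α (ξ i) - α (ξ (i-1))) *
        (-(∑ k ∈ Finset.range i, (Polynomial.derivative (l k)).eval t)) := by
    refine Finset.sum_congr rfl fun i hi => ?_
    simp only [Finset.mem_Icc] at hi
    rw [hFTC, he i hi.1 hi.2]
    simp [Polynomial.eval_finset_sum]
  rw [hR, abel_aux (fun i => α (ξ i)) (fun k => (Polynomial.derivative (l k)).eval t) p,
    hDsum]
  ring
end

section
/- Let p ≥ 1, let ξ_0 < ⋯ < ξ_p be distinct real nodes with Lagrange basis polynomials l_0, …, l_p and edge functions e_i = −∑_{k=0}^{i−1} l_k′ (1 ≤ i ≤ p). Then the edge functions e_1, …, e_p form a basis of the space of polynomials of degree at most p−1; in particular they are linearly independent. -/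
open Polynomial Finset


/-- The edge functions `e_1, …, e_p` are linearly independent and span the
space of polynomials of degree at most `p - 1` (i.e. of degree `< p`); in particular they
form a basis of that space. -/
theorem edge_functions_basis
    (p : ℕ) (hp : 1 ≤ p) (ξ : ℕ → ℝ)
    (hξ : ∀ i j, i < j → j ≤ p → ξ i < ξ j)
    (l : ℕ → Polynomial ℝ)
    (hdeg : ∀ i, i ≤ p → (l i).natDegree ≤ p)
    (hl : ∀ i, i ≤ p → ∀ j, j ≤ p → (l i).eval (ξ j) = if i = j then 1 else 0)
    (e : ℕ → Polynomial ℝ)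
    (he : ∀ i, 1 ≤ i → i ≤ p →
      e i = -∑ k ∈ Finset.range i, Polynomial.derivative (l k)) :
    LinearIndependent ℝ (fun i : Fin p => e (i.1 + 1)) ∧
      Submodule.span ℝ (Set.range (fun i : Fin p => e (i.1 + 1))) =
        Polynomial.degreeLT ℝ p := by
  -- degree of each derivative is < p
  have hder : ∀ k, k ≤ p → (Polynomial.derivative (l k)).degree < (p : WithBot ℕ) := by
    intro k hk
    by_cases h0 : l k = 0
    · rw [h0, derivative_zero, degree_zero]
      exact_mod_cast WithBot.bot_lt_coe p
    · exact lt_of_lt_of_le (degree_derivative_lt h0)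
        (le_trans (degree_le_natDegree) (by exact_mod_cast hdeg k hk))
  -- membership of e (i+1) in degreeLT
  have hmem : ∀ i : Fin p, e (i.1 + 1) ∈ degreeLT ℝ p := by
    intro i
    rw [Polynomial.mem_degreeLT, he (i.1+1) (Nat.le_add_left 1 i.1) i.2, degree_neg]
    refine lt_of_le_of_lt (degree_sum_le _ _) ?_
    rw [Finset.sup_lt_iff (by exact_mod_cast WithBot.bot_lt_coe p)]
    intro k hk
    exact hder k (le_of_lt (lt_of_lt_of_le (Finset.mem_range.mp hk) i.2))
  -- linear independence
  have hLI : LinearIndependent ℝ (fun i : Fin p => e (i.1 + 1)) := by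
    rw [Fintype.linearIndependent_iff]
    intro g hg
    -- antiderivatives
    set F : ℕ → Polynomial ℝ := fun i => -∑ k ∈ Finset.range i, l k with hF
    set G : Polynomial ℝ := ∑ i : Fin p, g i • F (i.1 + 1) with hGdef
    have hdG : Polynomial.derivative G = 0 := by
      rw [hGdef, map_sum]
      rw [← hg]
      refine Finset.sum_congr rfl fun i _ => ?_
      rw [Polynomial.derivative_smul, hF]
      rw [he (i.1+1) (Nat.le_add_left 1 i.1) i.2]
      simp [map_neg, map_sum]
    have hconst : ∀ x y : ℝ, G.eval x = G.eval y := by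
      have h0 : G.natDegree = 0 := natDegree_eq_zero_of_derivative_eq_zero hdG
      have := Polynomial.eq_C_of_natDegree_eq_zero h0
      intro x y; rw [this]; simp
    -- evaluation of G at ξ j
    have hevalF : ∀ i : Fin p, ∀ j, j ≤ p →
        (F (i.1 + 1)).eval (ξ j) = -(if j ≤ i.1 then (1:ℝ) else 0) := by
      intro i j hj
      rw [hF]
      simp only [eval_neg, eval_finset_sum, neg_inj]
      have : ∀ k ∈ Finset.range (i.1+1), (l k).eval (ξ j) = if k = j then (1:ℝ) else 0 := by
        intro k hk
        exact hl k (le_of_lt (lt_of_le_of_lt (Nat.lt_succ_iff.mp (Finset.mem_range.mp hk)) i.2)) j hj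
      rw [Finset.sum_congr rfl this, Finset.sum_ite_eq' (Finset.range (i.1+1)) j (fun _ => (1:ℝ))]
      simp only [Finset.mem_range, Nat.lt_succ_iff]
    set T : ℕ → ℝ := fun j => ∑ i : Fin p, (if j ≤ i.1 then g i else 0) with hT
    have hevalG : ∀ j, j ≤ p → G.eval (ξ j) = -(T j) := by
      intro j hj
      rw [hGdef]
      simp only [eval_finset_sum, eval_smul, smul_eq_mul]
      rw [hT]
      rw [← Finset.sum_neg_distrib]
      refine Finset.sum_congr rfl fun i _ => ?_
      rw [hevalF i j hj]
      by_cases h : j ≤ i.1 <;> simp [h]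
    have hTzero : ∀ j, j ≤ p → T j = 0 := by
      intro j hj
      have h1 : G.eval (ξ j) = G.eval (ξ p) := hconst _ _
      have h2 := hevalG j hj
      have h3 := hevalG p le_rfl
      have hTp : T p = 0 := by
        rw [hT]
        refine Finset.sum_eq_zero fun i _ => ?_
        simp [Nat.not_le.mpr i.2]
      rw [h2, h3, hTp] at h1
      linarith
    intro i
    have hstep : T i.1 - T (i.1 + 1) = g i := by
      rw [hT, ← Finset.sum_sub_distrib]
      have : ∀ k : Fin p,
          ((if i.1 ≤ k.1 then g k else 0) - (if i.1 + 1 ≤ k.1 then g k else 0))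
            = if k = i then g k else 0 := by
        intro k
        rcases lt_trichotomy k.1 i.1 with h | h | h
        · rw [if_neg (Nat.not_le.mpr h), if_neg (by omega), if_neg (by
            intro hk; rw [hk] at h; exact lt_irrefl _ h)]
          ring
        · rw [if_pos (le_of_eq h.symm), if_neg (by omega), if_pos (Fin.ext h)]
          ring
        · rw [if_pos h.le, if_pos (by omega), if_neg (by
            intro hk; rw [hk] at h; exact lt_irrefl _ h)]
          ring
      rw [Finset.sum_congr rfl fun k _ => this k, Finset.sum_ite_eq' Finset.univ i g]
      simp
    have h1 := hTzero i.1 i.2.le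
    have h2 := hTzero (i.1 + 1) i.2
    rw [h1, h2] at hstep
    linarith
  refine ⟨hLI, ?_⟩
  -- span: use dimension count inside degreeLT
  set v : Fin p → degreeLT ℝ p := fun i => ⟨e (i.1 + 1), hmem i⟩ with hv
  have hLIv : LinearIndependent ℝ v :=
    hLI.of_comp (degreeLT ℝ p).subtype
  have hfin : Module.Finite ℝ (degreeLT ℝ p) :=
    Module.Finite.equiv (degreeLTEquiv ℝ p).symm
  have hfr : Module.finrank ℝ (degreeLT ℝ p) = p := by
    rw [(degreeLTEquiv ℝ p).finrank_eq]
    simp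
  have hcard : Fintype.card (Fin p) = Module.finrank ℝ (degreeLT ℝ p) := by
    simp [hfr]
  haveI : Nonempty (Fin p) := ⟨⟨0, hp⟩⟩
  have hspan : Submodule.span ℝ (Set.range v) = ⊤ :=
    hLIv.span_eq_top_of_card_eq_finrank hcard
  have : Set.range (fun i : Fin p => e (i.1 + 1)) = (degreeLT ℝ p).subtype '' Set.range v := by
    rw [← Set.range_comp]; rfl
  rw [this, ← Submodule.map_span, hspan, Submodule.map_top, Submodule.range_subtype]
end

section
/- Let p ≥ 1, let ξ_0 < ⋯ < ξ_p be distinct real nodes with Lagrange basis polynomials l_0, …, l_p and edge functions e_i = −∑_{k=0}^{i−1} l_k′ (1 ≤ i ≤ p). Then the 1-form projection reproduces polynomials of degree at most p−1: for every polynomial q of degree ≤ p−1, q(ξ) = ∑_{i=1}^{p} (∫_{ξ_{i−1}}^{ξ_i} q(s) ds) e_i(ξ) for all ξ ∈ ℝ. Equivalently, a polynomial of degree ≤ p−1 is uniquely determined by its integrals over the p cells [ξ_{i−1}, ξ_i]. -/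
open Polynomial Finset

/-- Abel-summation style identity. -/
lemma aux_abel (p : ℕ) (F g : ℕ → ℝ) :
    ∑ j ∈ Finset.range p, (F (j + 1) - F j) * ∑ k ∈ Finset.range (j + 1), g k
      = ∑ k ∈ Finset.range p, (F p - F k) * g k := by
  induction p with
  | zero => simp
  | succ p ih =>
      rw [Finset.sum_range_succ, ih, Finset.sum_range_succ (f := fun k => (F (p+1) - F k) * g k)]
      have : ∑ k ∈ Finset.range p, (F (p+1) - F k) * g k
          = ∑ k ∈ Finset.range p, (F p - F k) * g k
            + (F (p+1) - F p) * ∑ k ∈ Finset.range p, g k := by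
        rw [Finset.mul_sum, ← Finset.sum_add_distrib]
        exact Finset.sum_congr rfl fun k _ => by ring
      rw [this, Finset.sum_range_succ (f := g)]
      ring

noncomputable def antider (q : Polynomial ℝ) : Polynomial ℝ :=
  q.sum fun n a => Polynomial.C (a / (n + 1)) * Polynomial.X ^ (n + 1)

lemma derivative_antider (q : Polynomial ℝ) :
    Polynomial.derivative (antider q) = q := by
  unfold antider
  rw [Polynomial.sum, map_sum]
  conv_rhs => rw [← Polynomial.sum_C_mul_X_pow_eq q, Polynomial.sum]
  refine Finset.sum_congr rfl fun n _ => ?_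
  rw [Polynomial.derivative_C_mul, Polynomial.derivative_X_pow]
  simp only [Nat.add_sub_cancel]
  rw [← mul_assoc, ← Polynomial.C_mul]
  congr 1
  have hn : ((n : ℝ) + 1) ≠ 0 := by positivity
  push_cast
  field_simp

lemma antider_natDegree_le {q : Polynomial ℝ} {p : ℕ} (hq : q.degree < p) :
    (antider q).natDegree ≤ p := by
  rcases eq_or_ne q 0 with rfl | hq0
  · simp [antider]
  have hnd : q.natDegree < p := (Polynomial.natDegree_lt_iff_degree_lt hq0).mpr hq
  refine Polynomial.natDegree_sum_le_of_forall_le _ _ fun n hn => ?_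
  calc (Polynomial.C (q.coeff n / (n+1)) * Polynomial.X ^ (n+1)).natDegree
      ≤ n + 1 := le_trans (Polynomial.natDegree_C_mul_le _ _) (by simp)
    _ ≤ p := Nat.succ_le_of_lt (lt_of_le_of_lt (Polynomial.le_natDegree_of_mem_supp n hn) hnd)

/-- The 1-form projection reproduces polynomials of degree at most `p - 1`:
for every polynomial `q` with `deg q < p`,
`q(ξ) = ∑_{i=1}^p (∫_{ξ_{i-1}}^{ξ_i} q) e_i(ξ)` for all `ξ`. -/
theorem histopolant_reproduces_polynomials
    (p : ℕ) (hp : 1 ≤ p) (ξ : ℕ → ℝ)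
    (hξ : ∀ i j, i < j → j ≤ p → ξ i < ξ j)
    (l : ℕ → Polynomial ℝ)
    (hdeg : ∀ i, i ≤ p → (l i).natDegree ≤ p)
    (hl : ∀ i, i ≤ p → ∀ j, j ≤ p → (l i).eval (ξ j) = if i = j then 1 else 0)
    (e : ℕ → Polynomial ℝ)
    (he : ∀ i, 1 ≤ i → i ≤ p →
      e i = -∑ k ∈ Finset.range i, Polynomial.derivative (l k))
    (q : Polynomial ℝ) (hq : q.degree < p) :
    ∀ x : ℝ,
      q.eval x =
        ∑ i ∈ Finset.Icc 1 p, (∫ s in (ξ (i - 1))..(ξ i), q.eval s) * (e i).eval x := by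
  intro x
  set Q := antider q with hQdef
  have hQ' : Polynomial.derivative Q = q := derivative_antider q
  set F : ℕ → ℝ := fun k => Q.eval (ξ k) with hF
  -- FTC: each integral is F i - F (i-1)
  have hint : ∀ a b : ℝ, (∫ s in a..b, q.eval s) = Q.eval b - Q.eval a := by
    intro a b
    rw [intervalIntegral.integral_eq_sub_of_hasDerivAt
      (f := fun y => Q.eval y) (fun y _ => by simpa [hQ'] using Q.hasDerivAt y)
      (q.continuous.intervalIntegrable a b)]
  -- interpolation: R := Q - C (F p) - ∑_{k<p} C (F k - F p) * l k = 0
  set R : Polynomial ℝ :=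
    Q - Polynomial.C (F p) - ∑ k ∈ Finset.range p, Polynomial.C (F k - F p) * l k with hR
  have hRdeg : R.natDegree ≤ p := by
    refine le_trans (Polynomial.natDegree_sub_le _ _) (max_le ?_ ?_)
    · exact le_trans (Polynomial.natDegree_sub_le _ _)
        (max_le (antider_natDegree_le hq) (le_trans (Polynomial.natDegree_C _).le (by omega)))
    · refine Polynomial.natDegree_sum_le_of_forall_le _ _ fun k hk => ?_
      exact le_trans (Polynomial.natDegree_C_mul_le _ _)
        (hdeg k (le_of_lt (Finset.mem_range.mp hk)))
  have hinj : Set.InjOn ξ ((Finset.range (p + 1)) : Finset ℕ) := by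
    intro a ha b hb hab
    simp only [Finset.coe_range, Set.mem_Iio] at ha hb
    by_contra hne
    rcases lt_or_gt_of_ne hne with h | h
    · exact absurd hab (ne_of_lt (hξ a b h (by omega)))
    · exact absurd hab.symm (ne_of_lt (hξ b a h (by omega)))
  have hReval : ∀ j, j ≤ p → R.eval (ξ j) = 0 := by
    intro j hj
    simp only [hR, Polynomial.eval_sub, Polynomial.eval_C, Polynomial.eval_finset_sum,
      Polynomial.eval_mul]
    have : ∀ k ∈ Finset.range p, (F k - F p) * (l k).eval (ξ j)
        = if k = j then F j - F p else 0 := by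
      intro k hk
      rw [hl k (le_of_lt (Finset.mem_range.mp hk)) j hj]
      split <;> simp_all
    rw [Finset.sum_congr rfl this, Finset.sum_ite_eq' (Finset.range p) j
      (fun _ => F j - F p)]
    rcases eq_or_lt_of_le hj with rfl | hjp
    · simp [hF]
    · simp [Finset.mem_range.mpr hjp, hF]
  have hR0 : R = 0 := by
    refine Polynomial.eq_zero_of_natDegree_lt_card_of_eval_eq_zero'
      R ((Finset.range (p + 1)).image ξ) ?_ ?_
    · intro y hy
      obtain ⟨j, hj, rfl⟩ := Finset.mem_image.mp hy
      exact hReval j (by simpa using Nat.lt_succ_iff.mp (Finset.mem_range.mp hj))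
    · rw [Finset.card_image_of_injOn hinj, Finset.card_range]
      omega
  -- differentiate
  have hder : q = ∑ k ∈ Finset.range p, Polynomial.C (F k - F p) * Polynomial.derivative (l k) := by
    have h2 : Polynomial.derivative (∑ k ∈ Finset.range p, Polynomial.C (F k - F p) * l k)
        = ∑ k ∈ Finset.range p, Polynomial.C (F k - F p) * Polynomial.derivative (l k) := by
      rw [map_sum]
      exact Finset.sum_congr rfl fun k _ => Polynomial.derivative_C_mul _ _
    have h3 := congrArg Polynomial.derivative hR0
    rw [hR, map_sub, map_sub, hQ', Polynomial.derivative_C, sub_zero, h2,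
      Polynomial.derivative_zero, sub_eq_zero] at h3
    exact h3
  -- rewrite RHS sum
  have hIcc : ∑ i ∈ Finset.Icc 1 p, (∫ s in (ξ (i - 1))..(ξ i), q.eval s) * (e i).eval x
      = ∑ j ∈ Finset.range p, (F (j + 1) - F j) *
          (-∑ k ∈ Finset.range (j + 1), (Polynomial.derivative (l k)).eval x) := by
    rw [show Finset.Icc 1 p = Finset.Ico 1 (p+1) by rw [Finset.Ico_add_one_right_eq_Icc],
      Finset.sum_Ico_eq_sum_range]
    simp only [Nat.add_sub_cancel]
    refine Finset.sum_congr rfl fun j hj => ?_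
    have hj' : j < p := Finset.mem_range.mp hj
    rw [hint, he (1 + j) (by omega) (by omega)]
    simp only [Nat.add_sub_cancel_left]
    rw [show 1 + j = j + 1 by omega]
    simp [hF, Polynomial.eval_finset_sum]
  rw [hIcc]
  have : ∑ j ∈ Finset.range p, (F (j + 1) - F j) *
          (-∑ k ∈ Finset.range (j + 1), (Polynomial.derivative (l k)).eval x)
      = -∑ j ∈ Finset.range p, (F (j + 1) - F j) *
          ∑ k ∈ Finset.range (j + 1), (Polynomial.derivative (l k)).eval x := by
    rw [← Finset.sum_neg_distrib]
    exact Finset.sum_congr rfl fun j _ => by ring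
  rw [this, aux_abel p F (fun k => (Polynomial.derivative (l k)).eval x)]
  conv_lhs => rw [hder]
  rw [Polynomial.eval_finset_sum, ← Finset.sum_neg_distrib]
  exact Finset.sum_congr rfl fun k _ => by simp; ring
end

section
/- Let p ≥ 1, let ξ_0 < ⋯ < ξ_p be distinct real nodes with Lagrange basis polynomials l_0, …, l_p and edge functions e_i = −∑_{k=0}^{i−1} l_k′ (1 ≤ i ≤ p), and define π¹f = ∑_{i=1}^{p} (∫_{ξ_{i−1}}^{ξ_i} f(ξ) dξ) e_i for integrable f : [ξ_0, ξ_p] → ℝ. Then π¹ is idempotent: π¹(π¹f) = π¹f for every integrable f, i.e., π¹ is a projection onto the span of e_1, …, e_p. -/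
/-- The histopolant projection `π¹f = ∑_i (∫_{ξ_{i-1}}^{ξ_i} f) e_i` is
idempotent: `π¹(π¹ f) = π¹ f` for every integrable `f`. -/
theorem histopolant_idempotent
    (p : ℕ) (hp : 1 ≤ p) (ξ : ℕ → ℝ)
    (hξ : ∀ i j, i < j → j ≤ p → ξ i < ξ j)
    (l : ℕ → Polynomial ℝ)
    (hdeg : ∀ i, i ≤ p → (l i).natDegree ≤ p)
    (hl : ∀ i, i ≤ p → ∀ j, j ≤ p → (l i).eval (ξ j) = if i = j then 1 else 0)
    (e : ℕ → Polynomial ℝ)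
    (he : ∀ i, 1 ≤ i → i ≤ p →
      e i = -∑ k ∈ Finset.range i, Polynomial.derivative (l k))
    (f : ℝ → ℝ) (hf : IntervalIntegrable f MeasureTheory.volume (ξ 0) (ξ p)) :
    ∀ x : ℝ,
      (∑ i ∈ Finset.Icc 1 p,
          (∫ s in (ξ (i - 1))..(ξ i),
            ∑ j ∈ Finset.Icc 1 p, (∫ u in (ξ (j - 1))..(ξ j), f u) * (e j).eval s) *
            (e i).eval x) =
        ∑ i ∈ Finset.Icc 1 p, (∫ s in (ξ (i - 1))..(ξ i), f s) * (e i).eval x := by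
  -- key: ∫_{ξ(i-1)}^{ξ i} (e j).eval = if j = i then 1 else 0
  have key : ∀ i, 1 ≤ i → i ≤ p → ∀ j, 1 ≤ j → j ≤ p →
      (∫ s in (ξ (i - 1))..(ξ i), (e j).eval s) = if j = i then (1 : ℝ) else 0 := by
    intro i hi1 hip j hj1 hjp
    set Q : Polynomial ℝ := -∑ k ∈ Finset.range j, l k with hQdef
    have hQ : Polynomial.derivative Q = e j := by
      rw [he j hj1 hjp, hQdef, map_neg, map_sum]
    have hint : ∫ s in (ξ (i - 1))..(ξ i), (e j).eval s
        = Q.eval (ξ i) - Q.eval (ξ (i - 1)) := by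
      rw [← hQ]
      exact intervalIntegral.integral_eq_sub_of_hasDerivAt
        (fun x _ => Q.hasDerivAt x)
        ((Polynomial.continuous _).intervalIntegrable _ _)
    have hevali : Q.eval (ξ i) = -(if i < j then (1:ℝ) else 0) := by
      rw [hQdef]
      simp only [Polynomial.eval_neg, Polynomial.eval_finset_sum]
      congr 1
      rw [Finset.sum_congr rfl (fun k hk => hl k
        (le_trans (Nat.le_of_lt_succ (Nat.lt_succ_of_lt (Finset.mem_range.mp hk))) hjp)
        i hip)]
      simp [Finset.sum_ite_eq, Finset.mem_range]
    have hevali' : Q.eval (ξ (i - 1)) = -(if i - 1 < j then (1:ℝ) else 0) := by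
      rw [hQdef]
      simp only [Polynomial.eval_neg, Polynomial.eval_finset_sum]
      congr 1
      rw [Finset.sum_congr rfl (fun k hk => hl k
        (le_trans (Nat.le_of_lt_succ (Nat.lt_succ_of_lt (Finset.mem_range.mp hk))) hjp)
        (i - 1) (le_trans (Nat.sub_le i 1) hip))]
      simp [Finset.sum_ite_eq, Finset.mem_range]
    rw [hint, hevali, hevali']
    split_ifs with h1 h2 h3 <;> first | (exfalso; omega) | norm_num
  intro x
  refine Finset.sum_congr rfl (fun i hi => ?_)
  obtain ⟨hi1, hip⟩ := Finset.mem_Icc.mp hi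
  congr 1
  rw [intervalIntegral.integral_finset_sum
    (f := fun j s => (∫ u in (ξ (j - 1))..(ξ j), f u) * (e j).eval s) (fun j _ =>
    (continuous_const.mul (Polynomial.continuous _)).intervalIntegrable _ _)]
  have : ∀ j ∈ Finset.Icc 1 p,
      (∫ s in (ξ (i - 1))..(ξ i), (∫ u in (ξ (j - 1))..(ξ j), f u) * (e j).eval s)
      = if j = i then (∫ u in (ξ (j - 1))..(ξ j), f u) else 0 := by
    intro j hj
    obtain ⟨hj1, hjp⟩ := Finset.mem_Icc.mp hj
    rw [intervalIntegral.integral_const_mul, key i hi1 hip j hj1 hjp]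
    split_ifs <;> ring
  rw [Finset.sum_congr rfl this, Finset.sum_ite_eq' (Finset.Icc 1 p) i]
  simp [hi]
end

section
/- Let p ≥ 1, let ξ_0 < ⋯ < ξ_p be distinct real nodes with Lagrange basis polynomials l_0, …, l_p and edge functions e_i = −∑_{k=0}^{i−1} l_k′ (1 ≤ i ≤ p). Then for any p pairwise distinct real points s_1, …, s_p, the p × p matrix A with entries A_{q,k} = e_k(s_q) is invertible. -/
/-- For any `p` pairwise distinct points `s_1, …, s_p`, the `p × p` matrix
`A_{q,k} = e_k(s_q)` built from the edge functions is invertible. -/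
theorem edge_collocation_matrix_invertible
    (p : ℕ) (hp : 1 ≤ p) (ξ : ℕ → ℝ)
    (hξ : ∀ i j, i < j → j ≤ p → ξ i < ξ j)
    (l : ℕ → Polynomial ℝ)
    (hdeg : ∀ i, i ≤ p → (l i).natDegree ≤ p)
    (hl : ∀ i, i ≤ p → ∀ j, j ≤ p → (l i).eval (ξ j) = if i = j then 1 else 0)
    (e : ℕ → Polynomial ℝ)
    (he : ∀ i, 1 ≤ i → i ≤ p →
      e i = -∑ k ∈ Finset.range i, Polynomial.derivative (l k))
    (s : Fin p → ℝ) (hs : Function.Injective s) :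
    IsUnit (Matrix.of fun q k : Fin p => (e (k.1 + 1)).eval (s q)) := by
  classical
  set M : Matrix (Fin p) (Fin p) ℝ :=
    Matrix.of (fun q k : Fin p => (e (k.1 + 1)).eval (s q)) with hM
  rw [Matrix.isUnit_iff_isUnit_det, isUnit_iff_ne_zero]
  intro hdet
  obtain ⟨v, hv0, hv⟩ := (Matrix.exists_mulVec_eq_zero_iff).mpr hdet
  set w : ℕ → ℝ := fun k => if h : k < p then v ⟨k, h⟩ else 0 with hw
  set P : Polynomial ℝ := ∑ k ∈ Finset.range p, Polynomial.C (w k) * e (k + 1) with hP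
  -- P vanishes at all the s q
  have hPeval : ∀ q : Fin p, P.eval (s q) = 0 := by
    intro q
    have h1 : ∑ k : Fin p, (e (k.1 + 1)).eval (s q) * v k = 0 := congrFun hv q
    have : P.eval (s q) = ∑ k : Fin p, (e (k.1 + 1)).eval (s q) * v k := by
      rw [hP, Polynomial.eval_finset_sum, Finset.sum_range]
      refine Finset.sum_congr rfl fun k _ => ?_
      simp [hw, k.2, mul_comm]
    rw [this, h1]
  -- degree bound
  have hPdeg : P.natDegree < p := by
    have : P.natDegree ≤ p - 1 := by
      refine Polynomial.natDegree_sum_le_of_forall_le _ _ fun k hk => ?_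
      refine (Polynomial.natDegree_C_mul_le _ _).trans ?_
      rw [he (k + 1) (by omega) (by simpa using Finset.mem_range.mp hk)]
      rw [Polynomial.natDegree_neg]
      refine Polynomial.natDegree_sum_le_of_forall_le _ _ fun j hj => ?_
      refine (Polynomial.natDegree_derivative_le _).trans ?_
      have hjp : j ≤ p := by
        have := Finset.mem_range.mp hj
        have := Finset.mem_range.mp hk
        omega
      exact Nat.sub_le_sub_right (hdeg j hjp) 1
    omega
  have hP0 : P = 0 := by
    refine Polynomial.eq_zero_of_natDegree_lt_card_of_eval_eq_zero P hs hPeval ?_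
    simpa using hPdeg
  -- partial sums
  set a : ℕ → ℝ := fun j => ∑ k ∈ Finset.range p, if j ≤ k then w k else 0 with ha
  have key : (∑ j ∈ Finset.range p,
      Polynomial.C (a j) * Polynomial.derivative (l j)) = 0 := by
    have hcalc : (∑ j ∈ Finset.range p,
        Polynomial.C (a j) * Polynomial.derivative (l j)) = -P := by
      calc ∑ j ∈ Finset.range p, Polynomial.C (a j) * Polynomial.derivative (l j)
          = ∑ j ∈ Finset.range p, ∑ k ∈ Finset.range p,
              (if j ≤ k then Polynomial.C (w k) * Polynomial.derivative (l j) else 0) := by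
            refine Finset.sum_congr rfl fun j _ => ?_
            rw [show Polynomial.C (a j)
                = ∑ k ∈ Finset.range p, if j ≤ k then Polynomial.C (w k) else 0 by
              simp [ha, map_sum, apply_ite Polynomial.C]]
            rw [Finset.sum_mul]
            exact Finset.sum_congr rfl fun k _ => by split <;> simp
        _ = ∑ k ∈ Finset.range p, ∑ j ∈ Finset.range p,
              (if j ≤ k then Polynomial.C (w k) * Polynomial.derivative (l j) else 0) :=
            Finset.sum_comm
        _ = ∑ k ∈ Finset.range p, ∑ j ∈ Finset.range (k + 1),
              Polynomial.C (w k) * Polynomial.derivative (l j) := by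
            refine Finset.sum_congr rfl fun k hk => ?_
            have hk' := Finset.mem_range.mp hk
            rw [← Finset.sum_subset (Finset.range_subset_range.mpr (by omega : k + 1 ≤ p))
              (fun j _ hj' => by
                rw [if_neg]
                have := Finset.mem_range.not.mp hj'
                omega)]
            refine Finset.sum_congr rfl fun j hj => ?_
            rw [if_pos (by have := Finset.mem_range.mp hj; omega)]
        _ = ∑ k ∈ Finset.range p, Polynomial.C (w k) *
              ∑ j ∈ Finset.range (k + 1), Polynomial.derivative (l j) := by
            simp [Finset.mul_sum]
        _ = -P := by
            rw [hP, ← Finset.sum_neg_distrib]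
            refine Finset.sum_congr rfl fun k hk => ?_
            rw [he (k + 1) (by omega) (by simpa using Finset.mem_range.mp hk)]
            ring
    rw [hcalc, hP0, neg_zero]
  -- antiderivative
  set Q : Polynomial ℝ := ∑ j ∈ Finset.range p, Polynomial.C (a j) * l j with hQ
  have hdQ : Polynomial.derivative Q = 0 := by
    rw [hQ, map_sum]
    rw [← key]
    refine Finset.sum_congr rfl fun j _ => ?_
    simp
  have hQc : Q = Polynomial.C (Q.coeff 0) := Polynomial.eq_C_of_derivative_eq_zero hdQ
  have hQevalp : Q.eval (ξ p) = 0 := by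
    rw [hQ, Polynomial.eval_finset_sum]
    refine Finset.sum_eq_zero fun j hj => ?_
    have hj' := Finset.mem_range.mp hj
    simp [hl j (by omega) p le_rfl, Nat.ne_of_lt hj']
  have hQ0 : Q = 0 := by
    have : Q.coeff 0 = 0 := by
      have := hQevalp
      rw [hQc] at this
      simpa using this
    rw [hQc, this, map_zero]
  have haj : ∀ j, j < p → a j = 0 := by
    intro j hjp
    have : Q.eval (ξ j) = a j := by
      rw [hQ, Polynomial.eval_finset_sum]
      rw [show a j = ∑ k ∈ Finset.range p, if k = j then a k else 0 by
        rw [Finset.sum_ite_eq' (Finset.range p) j a, if_pos (Finset.mem_range.mpr hjp)]]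
      refine Finset.sum_congr rfl fun k hk => ?_
      have hk' := Finset.mem_range.mp hk
      rw [Polynomial.eval_mul, Polynomial.eval_C, hl k (by omega) j (by omega)]
      split <;> simp
    rw [hQ0] at this
    simpa using this.symm
  have hap : a p = 0 := by
    rw [ha]
    refine Finset.sum_eq_zero fun k hk => ?_
    have := Finset.mem_range.mp hk
    rw [if_neg (by omega)]
  have hwk : ∀ k, k < p → w k = 0 := by
    intro k hkp
    have hdiff : a k - a (k + 1) = w k := by
      rw [ha]
      simp only [← Finset.sum_sub_distrib]
      rw [show (∑ j ∈ Finset.range p,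
          ((if k ≤ j then w j else 0) - (if k + 1 ≤ j then w j else 0)))
          = ∑ j ∈ Finset.range p, if j = k then w j else 0 by
        refine Finset.sum_congr rfl fun j _ => ?_
        rcases lt_trichotomy j k with h | h | h
        · rw [if_neg (by omega), if_neg (by omega), if_neg (by omega), sub_zero]
        · rw [if_pos (by omega), if_neg (by omega), if_pos (by omega), sub_zero]
        · rw [if_pos (by omega), if_pos (by omega), if_neg (by omega), sub_self]]
      rw [Finset.sum_ite_eq' (Finset.range p) k w, if_pos (Finset.mem_range.mpr hkp)]
    have hak : a k = 0 := haj k hkp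
    have hak1 : a (k + 1) = 0 := by
      rcases Nat.lt_or_ge (k + 1) p with h | h
      · exact haj _ h
      · have : k + 1 = p := by omega
        rw [this]; exact hap
    rw [← hdiff, hak, hak1, sub_zero]
  apply hv0
  funext k
  have := hwk k.1 k.2
  rw [hw] at this
  simpa [k.2] using this
end

section
/- Let p ≥ 1, let t^0 < t^1 < ⋯ < t^p be distinct real nodes with Lagrange basis polynomials l_0, …, l_p and edge functions e_k = −∑_{j=0}^{k−1} l_j′ (1 ≤ k ≤ p), and let t̃^1, …, t̃^p be any p real points. Given real numbers y^0, y^1, …, y^p and a function h : ℝ × ℝ → ℝ, set y_h(t) = ∑_{k=0}^{p} y^k l_k(t). Then the mimetic integrator equations ∑_{k=1}^{p} (y^k − y^{k−1}) e_k(t̃^q) = h(y_h(t̃^q), t̃^q) for q = 1, …, p hold if and only if y_h is a collocation solution at the points t̃^q, i.e., y_h′(t̃^q) = h(y_h(t̃^q), t̃^q) for q = 1, …, p. -/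
/-- Abel summation / summation by parts identity used below. -/
lemma mimetic_abel (n : ℕ) (d Y : ℕ → ℝ) :
    ∑ k ∈ Finset.Icc 1 n, (Y k - Y (k - 1)) * (-(∑ j ∈ Finset.range k, d j)) =
      ∑ j ∈ Finset.range n, (Y j - Y n) * d j := by
  induction n with
  | zero => simp
  | succ n ih =>
    rw [Finset.sum_Icc_succ_top (by omega : 1 ≤ n + 1), ih, Finset.sum_range_succ]
    have h1 : ∀ j ∈ Finset.range n, (Y j - Y (n + 1)) * d j =
        (Y j - Y n) * d j + (Y n - Y (n + 1)) * d j := fun j _ => by ring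
    rw [Finset.sum_range_succ (fun j => (Y j - Y (n + 1)) * d j) n,
      Finset.sum_congr rfl h1, Finset.sum_add_distrib, ← Finset.mul_sum]
    simp only [Nat.add_sub_cancel]
    ring

/-- The mimetic time integrator equations
`∑_k (y^k - y^{k-1}) e_k(t̃^q) = h(y_h(t̃^q), t̃^q)` (q = 1,…,p) hold if and only if the
interpolant `y_h(t) = ∑_k y^k l_k(t)` is a collocation solution at the points `t̃^q`. -/
theorem mimetic_integrator_iff_collocation
    (p : ℕ) (hp : 1 ≤ p) (t : ℕ → ℝ)
    (ht : ∀ i j, i < j → j ≤ p → t i < t j)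
    (l : ℕ → Polynomial ℝ)
    (hdeg : ∀ i, i ≤ p → (l i).natDegree ≤ p)
    (hl : ∀ i, i ≤ p → ∀ j, j ≤ p → (l i).eval (t j) = if i = j then 1 else 0)
    (e : ℕ → Polynomial ℝ)
    (he : ∀ k, 1 ≤ k → k ≤ p →
      e k = -∑ j ∈ Finset.range k, Polynomial.derivative (l j))
    (ttil : ℕ → ℝ) (y : ℕ → ℝ) (h : ℝ → ℝ → ℝ) :
    (∀ q, 1 ≤ q → q ≤ p →
        ∑ k ∈ Finset.Icc 1 p, (y k - y (k - 1)) * (e k).eval (ttil q) =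
          h (∑ k ∈ Finset.range (p + 1), y k * (l k).eval (ttil q)) (ttil q)) ↔
      (∀ q, 1 ≤ q → q ≤ p →
        deriv (fun s => ∑ k ∈ Finset.range (p + 1), y k * (l k).eval s) (ttil q) =
          h (∑ k ∈ Finset.range (p + 1), y k * (l k).eval (ttil q)) (ttil q)) := by
  -- Step 1: ∑_{j ≤ p} l_j = 1 as polynomials.
  have hinj : Function.Injective (fun i : Fin (p + 1) => t i) := by
    intro i j hij
    by_contra hne
    rcases lt_or_gt_of_ne (fun hc : (i : ℕ) = (j : ℕ) => hne (Fin.ext hc)) with hlt | hlt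
    · exact absurd hij (ne_of_lt (ht i j hlt (Nat.lt_succ_iff.mp j.isLt)))
    · exact absurd hij.symm (ne_of_lt (ht j i hlt (Nat.lt_succ_iff.mp i.isLt)))
  have hone : (∑ j ∈ Finset.range (p + 1), l j) = 1 := by
    have hz : ((∑ j ∈ Finset.range (p + 1), l j) - 1 : Polynomial ℝ) = 0 := by
      apply Polynomial.eq_zero_of_natDegree_lt_card_of_eval_eq_zero _ hinj
      · intro i
        simp only [Polynomial.eval_sub, Polynomial.eval_one, Polynomial.eval_finset_sum]
        rw [Finset.sum_congr rfl (fun j hj =>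
          hl j (Nat.lt_succ_iff.mp (Finset.mem_range.mp hj)) i (Nat.lt_succ_iff.mp i.isLt))]
        simp [Finset.sum_ite_eq' (Finset.range (p+1)) (i : ℕ), Nat.lt_succ_iff.mpr, Nat.lt_succ_iff.mp i.isLt]
      · calc ((∑ j ∈ Finset.range (p + 1), l j) - 1 : Polynomial ℝ).natDegree
            ≤ max (∑ j ∈ Finset.range (p + 1), l j).natDegree (1 : Polynomial ℝ).natDegree :=
              Polynomial.natDegree_sub_le _ _
          _ ≤ p := by
              apply max_le
              · exact Polynomial.natDegree_sum_le_of_forall_le _ _ fun j hj =>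
                  hdeg j (Nat.lt_succ_iff.mp (Finset.mem_range.mp hj))
              · simp
          _ < Fintype.card (Fin (p + 1)) := by simp
    exact sub_eq_zero.mp hz
  -- Step 2: the derivatives of the Lagrange basis sum to zero.
  have hder : (∑ j ∈ Finset.range (p + 1), Polynomial.derivative (l j)) = 0 := by
    have := congrArg Polynomial.derivative hone
    simpa [map_sum] using this
  -- Step 3: the key algebraic identity relating the two sides, pointwise.
  have key : ∀ s : ℝ,
      ∑ k ∈ Finset.Icc 1 p, (y k - y (k - 1)) * (e k).eval s =
        ∑ k ∈ Finset.range (p + 1), y k * (Polynomial.derivative (l k)).eval s := by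
    intro s
    set d : ℕ → ℝ := fun j => (Polynomial.derivative (l j)).eval s with hd
    have h1 : ∀ k ∈ Finset.Icc 1 p, (y k - y (k - 1)) * (e k).eval s =
        (y k - y (k - 1)) * (-(∑ j ∈ Finset.range k, d j)) := by
      intro k hk
      rcases Finset.mem_Icc.mp hk with ⟨hk1, hk2⟩
      rw [he k hk1 hk2]
      simp [d, Polynomial.eval_finset_sum]
    rw [Finset.sum_congr rfl h1, mimetic_abel p d y]
    have hdp : ∑ j ∈ Finset.range p, d j = -d p := by
      have : ∑ j ∈ Finset.range (p + 1), d j = 0 := by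
        have := congrArg (Polynomial.eval s) hder
        simpa [Polynomial.eval_finset_sum, d] using this
      rw [Finset.sum_range_succ] at this
      linarith
    have h2 : ∀ j ∈ Finset.range p, (y j - y p) * d j = y j * d j - y p * d j :=
      fun j _ => by ring
    rw [Finset.sum_congr rfl h2, Finset.sum_sub_distrib, ← Finset.mul_sum, hdp,
      Finset.sum_range_succ (fun k => y k * d k) p]
    ring
  -- Step 4: the derivative of the interpolant.
  have hderiv : ∀ s : ℝ,
      deriv (fun s => ∑ k ∈ Finset.range (p + 1), y k * (l k).eval s) s =
        ∑ k ∈ Finset.range (p + 1), y k * (Polynomial.derivative (l k)).eval s := by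
    intro s
    have : HasDerivAt (fun s => ∑ k ∈ Finset.range (p + 1), y k * (l k).eval s)
        (∑ k ∈ Finset.range (p + 1), y k * (Polynomial.derivative (l k)).eval s) s := by
      apply HasDerivAt.fun_sum
      intro k _
      exact ((l k).hasDerivAt s).const_mul (y k)
    exact this.deriv
  constructor
  · intro H q hq1 hq2
    rw [hderiv, ← key]
    exact H q hq1 hq2
  · intro H q hq1 hq2
    rw [key, ← hderiv]
    exact H q hq1 hq2
end

section
/- Let p ≥ 1, let t^0 < ⋯ < t^p be distinct real nodes with Lagrange basis polynomials l_0, …, l_p and edge functions e_k = −∑_{j=0}^{k−1} l_j′ (1 ≤ k ≤ p), and let t̃^1, …, t̃^p be p pairwise distinct real points. Let N, M ≥ 1, let E be a real N × M matrix whose column sums all vanish (∑_{i=1}^{N} E_{il} = 0 for every l), and let ρ_i^k (1 ≤ i ≤ N, 0 ≤ k ≤ p) and ς_l^q (1 ≤ l ≤ M, 1 ≤ q ≤ p) be real numbers satisfying the discrete advection scheme ∑_{k=1}^{p} (ρ_i^k − ρ_i^{k−1}) e_k(t̃^q) = −∑_{l=1}^{M} E_{il} ς_l^q for all i and all q. Then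 total mass is conserved: ∑_{i=1}^{N} ρ_i^k = ∑_{i=1}^{N} ρ_i^0 for every k = 0, …, p. -/
lemma tel_aux (f : ℕ → ℝ) : ∀ b j, j ≤ b →
    ∑ k ∈ Finset.Icc (j+1) b, (f k - f (k-1)) = f b - f j := by
  intro b
  induction b with
  | zero => intro j hj; interval_cases j; simp
  | succ b ih =>
    intro j hj
    rcases Nat.lt_or_ge j (b+1) with h | h
    · have hj' : j ≤ b := Nat.lt_succ_iff.mp h
      rw [Finset.sum_Icc_succ_top (by omega), ih j hj']
      simp
    · have : j = b + 1 := le_antisymm hj h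
      subst this
      simp

/-- Mass conservation of the mimetic advection scheme. If the incidence
matrix `E` has vanishing column sums and the degrees of freedom satisfy the discrete
advection scheme `∑_k (ρ_i^k - ρ_i^{k-1}) e_k(t̃^q) = -∑_l E_{il} ς_l^q` at `p` pairwise
distinct staggered time points `t̃^1, …, t̃^p`, then `∑_i ρ_i^k = ∑_i ρ_i^0` for all
`k = 0, …, p`. -/
theorem mimetic_advection_mass_conservation
    (p : ℕ) (hp : 1 ≤ p) (t : ℕ → ℝ)
    (ht : ∀ i j, i < j → j ≤ p → t i < t j)
    (l : ℕ → Polynomial ℝ)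
    (hdeg : ∀ i, i ≤ p → (l i).natDegree ≤ p)
    (hl : ∀ i, i ≤ p → ∀ j, j ≤ p → (l i).eval (t j) = if i = j then 1 else 0)
    (e : ℕ → Polynomial ℝ)
    (he : ∀ k, 1 ≤ k → k ≤ p →
      e k = -∑ j ∈ Finset.range k, Polynomial.derivative (l j))
    (ttil : ℕ → ℝ)
    (httil : ∀ q q', 1 ≤ q → q ≤ p → 1 ≤ q' → q' ≤ p → ttil q = ttil q' → q = q')
    (N M : ℕ) (hN : 1 ≤ N) (hM : 1 ≤ M)
    (E : Matrix (Fin N) (Fin M) ℝ)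
    (hE : ∀ lcol : Fin M, ∑ i : Fin N, E i lcol = 0)
    (ρ : Fin N → ℕ → ℝ) (ς : Fin M → ℕ → ℝ)
    (hscheme : ∀ (i : Fin N) (q : ℕ), 1 ≤ q → q ≤ p →
      ∑ k ∈ Finset.Icc 1 p, (ρ i k - ρ i (k - 1)) * (e k).eval (ttil q) =
        -∑ lcol : Fin M, E i lcol * ς lcol q) :
    ∀ k, k ≤ p → ∑ i : Fin N, ρ i k = ∑ i : Fin N, ρ i 0 := by
  classical
  set S : ℕ → ℝ := fun k => ∑ i : Fin N, ρ i k with hS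
  -- Step A: the summed scheme
  have stepA : ∀ q, 1 ≤ q → q ≤ p →
      ∑ k ∈ Finset.Icc 1 p, (S k - S (k-1)) * (e k).eval (ttil q) = 0 := by
    intro q hq1 hq2
    have := Finset.sum_congr rfl (fun i (_ : i ∈ Finset.univ) => hscheme i q hq1 hq2)
    rw [Finset.sum_comm] at this
    have hlhs : ∑ k ∈ Finset.Icc 1 p, ∑ i : Fin N,
        (ρ i k - ρ i (k - 1)) * (e k).eval (ttil q)
        = ∑ k ∈ Finset.Icc 1 p, (S k - S (k-1)) * (e k).eval (ttil q) := by
      refine Finset.sum_congr rfl fun k _ => ?_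
      rw [← Finset.sum_mul, hS]
      simp [Finset.sum_sub_distrib]
    have hrhs : ∑ i : Fin N, -∑ lcol : Fin M, E i lcol * ς lcol q = 0 := by
      have h3 : ∑ i : Fin N, -∑ lcol : Fin M, E i lcol * ς lcol q
          = -∑ i : Fin N, ∑ lcol : Fin M, E i lcol * ς lcol q := by simp
      rw [h3, Finset.sum_comm]
      simp only [← Finset.sum_mul, hE]
      simp
    rw [hlhs, hrhs] at this
    exact this
  -- the polynomial R
  set R : Polynomial ℝ := ∑ j ∈ Finset.range p, Polynomial.C (S p - S j) * l j with hR
  have hderivR : Polynomial.derivative R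
      = ∑ j ∈ Finset.range p, Polynomial.C (S p - S j) * Polynomial.derivative (l j) := by
    rw [hR, map_sum]
    exact Finset.sum_congr rfl fun j _ => by
      rw [Polynomial.derivative_mul]; simp
  -- derivative R = - Q
  have hQ : Polynomial.derivative R =
      -∑ k ∈ Finset.Icc 1 p, Polynomial.C (S k - S (k-1)) * e k := by
    have h1 : ∀ k ∈ Finset.Icc 1 p,
        Polynomial.C (S k - S (k-1)) * e k
        = -∑ j ∈ Finset.range p, (if j < k then
            Polynomial.C (S k - S (k-1)) * Polynomial.derivative (l j) else 0) := by
      intro k hk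
      rw [Finset.mem_Icc] at hk
      rw [he k hk.1 hk.2, Finset.sum_ite, Finset.sum_const_zero, add_zero]
      have : (Finset.range p).filter (fun j => j < k) = Finset.range k := by
        ext j; simp only [Finset.mem_filter, Finset.mem_range]; omega
      rw [this, mul_neg, Finset.mul_sum]
    rw [Finset.sum_congr rfl h1]
    simp only [Finset.sum_neg_distrib, neg_neg]
    rw [Finset.sum_comm, hderivR]
    refine Finset.sum_congr rfl fun j hj => ?_
    rw [Finset.mem_range] at hj
    have h2 : ∀ k ∈ Finset.Icc 1 p,
        (if j < k then Polynomial.C (S k - S (k-1)) * Polynomial.derivative (l j) else 0)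
        = Polynomial.C (if j < k then S k - S (k-1) else 0) * Polynomial.derivative (l j) := by
      intro k hk; split <;> simp
    rw [Finset.sum_congr rfl h2, ← Finset.sum_mul, ← map_sum]
    congr 2
    rw [Finset.sum_ite, Finset.sum_const_zero, add_zero]
    have : (Finset.Icc 1 p).filter (fun k => j < k) = Finset.Icc (j+1) p := by
      ext k; simp only [Finset.mem_filter, Finset.mem_Icc]; omega
    rw [this, tel_aux S p j (le_of_lt hj)]
  -- evaluation of derivative R at staggered points is 0
  have heval : ∀ q : Fin p, (Polynomial.derivative R).eval (ttil (q.val + 1)) = 0 := by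
    intro q
    rw [hQ]
    have : (∑ k ∈ Finset.Icc 1 p, Polynomial.C (S k - S (k-1)) * e k).eval (ttil (q.val+1))
        = ∑ k ∈ Finset.Icc 1 p, (S k - S (k-1)) * (e k).eval (ttil (q.val+1)) := by
      rw [Polynomial.eval_finset_sum]
      exact Finset.sum_congr rfl fun k _ => by simp
    rw [Polynomial.eval_neg, this, stepA (q.val+1) (by omega) (by omega), neg_zero]
  -- degree bound
  have hdegQ : (Polynomial.derivative R).natDegree < p := by
    rw [hderivR]
    calc (∑ j ∈ Finset.range p, Polynomial.C (S p - S j) * Polynomial.derivative (l j)).natDegree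
        ≤ p - 1 := by
          apply Polynomial.natDegree_sum_le_of_forall_le
          intro j hj
          rw [Finset.mem_range] at hj
          calc (Polynomial.C (S p - S j) * Polynomial.derivative (l j)).natDegree
              ≤ (Polynomial.derivative (l j)).natDegree := Polynomial.natDegree_C_mul_le _ _
            _ ≤ (l j).natDegree - 1 := Polynomial.natDegree_derivative_le _
            _ ≤ p - 1 := by have := hdeg j (le_of_lt hj); omega
      _ < p := by omega
  -- derivative R = 0
  have hinj : Function.Injective (fun q : Fin p => ttil (q.val + 1)) := by
    intro a b hab
    have := httil (a.val+1) (b.val+1) (by omega) (by omega) (by omega) (by omega) hab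
    exact Fin.ext (by omega)
  have hd0 : Polynomial.derivative R = 0 := by
    apply Polynomial.eq_zero_of_natDegree_lt_card_of_eval_eq_zero _ hinj heval
    simpa using hdegQ
  have hRC : R = Polynomial.C (R.coeff 0) := Polynomial.eq_C_of_derivative_eq_zero hd0
  -- evaluations of R
  have hevalR : ∀ j, j ≤ p → R.eval (t j) = if j < p then S p - S j else 0 := by
    intro j hj
    rw [hR, Polynomial.eval_finset_sum]
    have : ∀ j' ∈ Finset.range p,
        (Polynomial.C (S p - S j') * l j').eval (t j)
        = if j' = j then S p - S j' else 0 := by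
      intro j' hj'
      rw [Finset.mem_range] at hj'
      rw [Polynomial.eval_mul, Polynomial.eval_C, hl j' (le_of_lt hj') j hj]
      split <;> simp
    rw [Finset.sum_congr rfl this, Finset.sum_ite_eq' (Finset.range p) j (fun j' => S p - S j')]
    simp [Finset.mem_range]
  -- conclude S j = S p for all j ≤ p
  have hconst : ∀ j, j ≤ p → S j = S p := by
    intro j hj
    rcases Nat.lt_or_ge j p with h | h
    · have h1 := hevalR j hj
      have h2 := hevalR p le_rfl
      rw [hRC] at h1 h2
      simp only [Polynomial.eval_C] at h1 h2
      rw [if_pos h] at h1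
      rw [if_neg (lt_irrefl p)] at h2
      have : S p - S j = 0 := by rw [← h1, h2]
      linarith
    · have : j = p := le_antisymm hj h
      rw [this]
  intro k hk
  have := hconst k hk
  have h0 := hconst 0 (by omega)
  show S k = S 0
  rw [this, h0]
end
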